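/- The function g₂ : B₁ → ℝ defined by g₂(c₁,…,cₙ) = ½( cₙ − (1/cₙ)·c̄/(c̄+1) + √((cₙ − (1/cₙ)·c̄/(c̄+1))² + 4) ) for cₙ > 0, where c̄ = c₁ + ⋯ + c_{n−1}, satisfies: (i) ∂g₂/∂cₙ > 0 wherever c̄ > 0; (ii) lim_{cₙ→0⁺} g₂(0,…,0,cₙ) = 1; (iii) g₂(c₁,…,c_{n−1},cₙ) → 0 as cₙ → 0⁺ when c̄ > 0; (iv) g₂(c₁,…,cₙ) → ∞ as cₙ → ∞. -/

import Mathlib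

open Set Filter

private noncomputable def g2aux (a t : ℝ) : ℝ :=
  (1 / 2) * ((t - (1 / t) * a) + Real.sqrt ((t - (1 / t) * a) ^ 2 + 4))

private lemma g2aux_hasDerivAt (a : ℝ) (ha : 0 ≤ a) {t : ℝ} (ht : 0 < t) :
    ∃ D, 0 < D ∧ HasDerivAt (g2aux a) D t := by
  have ht' : t ≠ 0 := ht.ne'
  set u : ℝ := t - (1 / t) * a with hu
  have hq : 0 < u ^ 2 + 4 := by positivity
  have hsqpos : 0 < Real.sqrt (u ^ 2 + 4) := Real.sqrt_pos.mpr hq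
  have hu' : HasDerivAt (fun x : ℝ => x - (1 / x) * a) (1 + a / t ^ 2) t := by
    have h1 : HasDerivAt (fun x : ℝ => (1 / x) * a) (-(1 / t ^ 2) * a) t := by
      simpa using ((hasDerivAt_inv ht').mul_const a)
    have := (hasDerivAt_id t).sub h1
    refine this.congr_deriv ?_
    ring
  have hs : HasDerivAt (fun x : ℝ => Real.sqrt ((x - (1 / x) * a) ^ 2 + 4))
      ((1 + a / t ^ 2) * (u / Real.sqrt (u ^ 2 + 4))) t := by
    have hpow := (hu'.pow 2).add_const 4
    have h2 := (Real.hasDerivAt_sqrt hq.ne').comp t hpow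
    refine h2.congr_deriv ?_
    push_cast
    rw [← hu, pow_one]
    field_simp
  have hD : HasDerivAt (g2aux a)
      ((1 / 2) * ((1 + a / t ^ 2) + (1 + a / t ^ 2) * (u / Real.sqrt (u ^ 2 + 4)))) t :=
    (hu'.add hs).const_mul (1 / 2)
  refine ⟨_, ?_, hD⟩
  have habs : |u| < Real.sqrt (u ^ 2 + 4) := by
    rw [← Real.sqrt_sq_eq_abs]
    exact Real.sqrt_lt_sqrt (sq_nonneg u) (by linarith)
  have hup : 0 < 1 + a / t ^ 2 := by positivity
  have key : 0 < 1 + u / Real.sqrt (u ^ 2 + 4) := by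
    have h1 : -Real.sqrt (u ^ 2 + 4) < u := (abs_lt.mp habs).1
    have : -1 < u / Real.sqrt (u ^ 2 + 4) := by
      rw [lt_div_iff₀ hsqpos]; linarith
    linarith
  nlinarith [mul_pos hup key]

private lemma g2aux_eq_div (a : ℝ) {t : ℝ} (ht : 0 < t) :
    g2aux a t = 2 / (Real.sqrt ((t - (1 / t) * a) ^ 2 + 4) - (t - (1 / t) * a)) := by
  set u : ℝ := t - (1 / t) * a with hu
  have hq : 0 < u ^ 2 + 4 := by positivity
  have hsq : Real.sqrt (u ^ 2 + 4) ^ 2 = u ^ 2 + 4 := Real.sq_sqrt hq.le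
  have habs : |u| < Real.sqrt (u ^ 2 + 4) := by
    rw [← Real.sqrt_sq_eq_abs]
    exact Real.sqrt_lt_sqrt (sq_nonneg u) (by linarith)
  have hden : 0 < Real.sqrt (u ^ 2 + 4) - u := by
    have := (abs_lt.mp habs).2; linarith
  rw [g2aux, ← hu, eq_div_iff hden.ne']
  linear_combination (1 / 2 : ℝ) * hsq

/-- Properties of `g₂(c₁,…,cₙ) = ½(cₙ − (1/cₙ)·c̄/(c̄+1) + √((cₙ − (1/cₙ)·c̄/(c̄+1))² + 4))`,
where `c̄ = c₁ + ⋯ + c_{n−1}` and the point `(c₁,…,c_{n−1},cₙ)` lies in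
`B₁ = [0,∞)ⁿ \ {0}ⁿ` (first `n−1` coordinates `c : Fin m → ℝ`, last coordinate `cₙ`). -/
theorem g2_properties (m : ℕ)
    (g₂ : (Fin m → ℝ) → ℝ → ℝ)
    (hg₂ : ∀ (c : Fin m → ℝ) (t : ℝ), 0 < t →
      g₂ c t = (1 / 2) * ((t - (1 / t) * ((∑ i, c i) / ((∑ i, c i) + 1))) +
        Real.sqrt ((t - (1 / t) * ((∑ i, c i) / ((∑ i, c i) + 1))) ^ 2 + 4))) :
    -- (i) ∂g₂/∂cₙ > 0 wherever c̄ > 0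
    (∀ (c : Fin m → ℝ), (∀ i, 0 ≤ c i) → 0 < ∑ i, c i →
      ∀ t : ℝ, 0 < t → 0 < deriv (g₂ c) t) ∧
    -- (ii) lim_{cₙ→0⁺} g₂(0,…,0,cₙ) = 1
    Tendsto (g₂ 0) (nhdsWithin 0 (Set.Ioi 0)) (nhds 1) ∧
    -- (iii) g₂ → 0 as cₙ → 0⁺ when c̄ > 0
    (∀ (c : Fin m → ℝ), (∀ i, 0 ≤ c i) → 0 < ∑ i, c i →
      Tendsto (g₂ c) (nhdsWithin 0 (Set.Ioi 0)) (nhds 0)) ∧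
    -- (iv) g₂ → ∞ as cₙ → ∞
    (∀ (c : Fin m → ℝ), (∀ i, 0 ≤ c i) → Tendsto (g₂ c) atTop atTop) := by
  refine ⟨?_, ?_, ?_, ?_⟩
  · -- (i)
    intro c hc hs t ht
    set a : ℝ := (∑ i, c i) / ((∑ i, c i) + 1) with ha_def
    have hs0 : (0:ℝ) ≤ ∑ i, c i := le_of_lt hs
    have ha : 0 ≤ a := div_nonneg hs0 (by linarith)
    obtain ⟨D, hDpos, hD⟩ := g2aux_hasDerivAt a ha ht
    have heq : g₂ c =ᶠ[nhds t] g2aux a := by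
      filter_upwards [Ioi_mem_nhds ht] with x hx
      rw [hg₂ c x hx]; rfl
    have : HasDerivAt (g₂ c) D t := hD.congr_of_eventuallyEq heq
    rw [this.deriv]; exact hDpos
  · -- (ii)
    have hsum : (∑ i, (0 : Fin m → ℝ) i) = 0 := by simp
    have heq : ∀ x ∈ Set.Ioi (0:ℝ),
        g₂ 0 x = (1/2) * (x + Real.sqrt (x ^ 2 + 4)) := by
      intro x hx
      rw [hg₂ 0 x hx, hsum]
      norm_num
    have hF : Tendsto (fun x : ℝ => (1/2) * (x + Real.sqrt (x ^ 2 + 4)))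
        (nhdsWithin 0 (Set.Ioi 0)) (nhds 1) := by
      have hcont : Continuous (fun x : ℝ => (1/2) * (x + Real.sqrt (x ^ 2 + 4))) := by
        fun_prop
      have h0 : (1/2 : ℝ) * ((0:ℝ) + Real.sqrt ((0:ℝ) ^ 2 + 4)) = 1 := by
        have : Real.sqrt ((0:ℝ) ^ 2 + 4) = 2 := by
          rw [show ((0:ℝ) ^ 2 + 4) = 2 ^ 2 by norm_num, Real.sqrt_sq (by norm_num)]
        rw [this]; norm_num
      have h2 : Tendsto (fun x : ℝ => (1/2) * (x + Real.sqrt (x ^ 2 + 4)))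
          (nhdsWithin 0 (Set.Ioi 0)) (nhds ((1/2) * ((0:ℝ) + Real.sqrt ((0:ℝ) ^ 2 + 4)))) :=
        (hcont.tendsto 0).mono_left nhdsWithin_le_nhds
      rwa [h0] at h2
    exact hF.congr' (eventuallyEq_of_mem self_mem_nhdsWithin fun x hx => (heq x hx).symm)
  · -- (iii)
    intro c hc hs
    set a : ℝ := (∑ i, c i) / ((∑ i, c i) + 1) with ha_def
    have ha : 0 < a := div_pos hs (by linarith)
    set den : ℝ → ℝ := fun x => Real.sqrt ((x - (1/x) * a) ^ 2 + 4) - (x - (1/x) * a)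
      with hden_def
    have hneg : Tendsto (fun x : ℝ => a * x⁻¹ + -x) (nhdsWithin 0 (Set.Ioi 0)) atTop := by
      have h1 : Tendsto (fun x : ℝ => a * x⁻¹) (nhdsWithin 0 (Set.Ioi 0)) atTop :=
        tendsto_inv_nhdsGT_zero.const_mul_atTop ha
      refine tendsto_atTop_add_right_of_le' _ (-1 : ℝ) h1 ?_
      filter_upwards [Ioo_mem_nhdsGT_of_mem (show (0:ℝ) ∈ Set.Ico (0:ℝ) 1 by norm_num)]
        with x hx
      linarith [hx.2]
    have hden : Tendsto den (nhdsWithin 0 (Set.Ioi 0)) atTop := by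
      refine tendsto_atTop_mono (fun x => ?_) hneg
      have := Real.sqrt_nonneg ((x - (1/x) * a) ^ 2 + 4)
      simp only [hden_def, one_div]
      have hcomm : a * x⁻¹ = x⁻¹ * a := mul_comm _ _
      linarith [Real.sqrt_nonneg ((x - x⁻¹ * a) ^ 2 + 4)]
    have hlim : Tendsto (fun x => 2 / den x) (nhdsWithin 0 (Set.Ioi 0)) (nhds 0) := by
      have := (tendsto_inv_atTop_zero.comp hden).const_mul 2
      simpa [div_eq_mul_inv] using this
    refine hlim.congr' (eventuallyEq_of_mem self_mem_nhdsWithin fun x hx => ?_)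
    rw [hg₂ c x hx]
    exact (g2aux_eq_div a hx).symm
  · -- (iv)
    intro c hc
    set a : ℝ := (∑ i, c i) / ((∑ i, c i) + 1) with ha_def
    have hs0 : (0:ℝ) ≤ ∑ i, c i := Finset.sum_nonneg fun i _ => hc i
    have ha : 0 ≤ a := div_nonneg hs0 (by linarith)
    have hbase : Tendsto (fun x : ℝ => (1/2) * (x - a)) atTop atTop := by
      have := (tendsto_atTop_add_const_right atTop (-a) tendsto_id).const_mul_atTop
        (show (0:ℝ) < 1/2 by norm_num)
      simpa [sub_eq_add_neg] using this
    refine tendsto_atTop_mono' _ ?_ hbase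
    filter_upwards [eventually_ge_atTop (1:ℝ)] with x hx
    have hx0 : (0:ℝ) < x := by linarith
    rw [hg₂ c x hx0]
    have h1 : (1/x) * a ≤ a := by
      have hxi : 1/x ≤ 1 := by rw [div_le_one hx0]; linarith
      calc (1/x) * a ≤ 1 * a := mul_le_mul_of_nonneg_right hxi ha
        _ = a := one_mul a
    have h2 := Real.sqrt_nonneg ((x - (1/x) * a) ^ 2 + 4)
    nlinarith
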